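/- Let f : ℝ^n → ℝ be locally Lipschitz, x ∈ ℝ^n, ε > 0, δ ≥ 0, and let A ⊆ ∂_ε f(x) be a nonempty closed convex set with ∂_ε f(x) ⊆ A + closedBall(0, δ). Let g̃ be the minimal-norm element of A, let 0 < β < 1, and suppose δ ≤ (1−β)‖g̃‖. Then for all 0 ≤ t ≤ ε/‖g̃‖, f(x − t g̃) ≤ f(x) − β t ‖g̃‖². -/

import Mathlib

open Filter Topology Pointwise

/-- The Goldstein ε-subgradient: the closed convex hull of all limits of gradients of `f`
at differentiability points converging to some point within distance `ε` of `x`. -/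
noncomputable def goldstein {n : ℕ} (f : EuclideanSpace ℝ (Fin n) → ℝ) (ε : ℝ)
    (x : EuclideanSpace ℝ (Fin n)) : Set (EuclideanSpace ℝ (Fin n)) :=
  closure (convexHull ℝ {g | ∃ x' : EuclideanSpace ℝ (Fin n), ‖x' - x‖ ≤ ε ∧
    ∃ u : ℕ → EuclideanSpace ℝ (Fin n),
      Tendsto u atTop (𝓝 x') ∧ (∀ i, DifferentiableAt ℝ f (u i)) ∧
      Tendsto (fun i => gradient f (u i)) atTop (𝓝 g)})

open MeasureTheory Set

set_option maxHeartbeats 1000000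

lemma aux_lip_Icc {u : ℝ → ℝ} (hu : LocallyLipschitz u) (a b : ℝ) :
    ∃ C : ℝ, 0 ≤ C ∧ ∀ p ∈ Set.Icc a b, ∀ q ∈ Set.Icc a b, |u q - u p| ≤ C * |q - p| := by
  choose K t ht hK using hu
  obtain ⟨S, hS⟩ := isCompact_Icc.elim_finite_subcover (fun z => interior (t z))
    (fun z => isOpen_interior)
    (fun p _ => Set.mem_iUnion.2 ⟨p, mem_interior_iff_mem_nhds.2 (ht p)⟩)
  obtain ⟨δ, hδ0, hδ⟩ := lebesgue_number_lemma_of_metric (ι := S)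
    (c := fun i => interior (t i)) isCompact_Icc
    (fun i => isOpen_interior) (fun p hp => by
      obtain ⟨z, hz, hzi⟩ := Set.mem_iUnion₂.1 (hS hp)
      exact Set.mem_iUnion.2 ⟨⟨z, hz⟩, hzi⟩)
  set C : NNReal := S.sup K with hC
  have hKC : ∀ i : S, (K i : ℝ) ≤ C := fun i => by exact_mod_cast Finset.le_sup i.2
  have short : ∀ p ∈ Set.Icc a b, ∀ q ∈ Set.Icc a b, |q - p| < δ →
      |u q - u p| ≤ (C : ℝ) * |q - p| := by
    intro p hp q hq hpq
    obtain ⟨i, hi⟩ := hδ p hp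
    have hpmem : p ∈ interior (t i) := hi (Metric.mem_ball_self hδ0)
    have hqmem : q ∈ interior (t i) := hi (by rwa [Metric.mem_ball, Real.dist_eq])
    have h2 := ((hK i).mono interior_subset) hqmem hpmem
    rw [edist_dist, edist_dist] at h2
    have h3 : dist (u q) (u p) ≤ (K i : ℝ) * dist q p := by
      have := ((hK i).mono interior_subset).dist_le_mul q hqmem p hpmem
      exact this
    rw [Real.dist_eq, Real.dist_eq] at h3
    exact h3.trans (mul_le_mul_of_nonneg_right (hKC i) (abs_nonneg _))
  refine ⟨C, C.coe_nonneg, ?_⟩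
  have main : ∀ p ∈ Set.Icc a b, ∀ q ∈ Set.Icc a b, p ≤ q → |u q - u p| ≤ C * (q - p) := by
    intro p hp q hq hpq
    obtain ⟨N, hN⟩ := exists_nat_gt ((q - p) / δ)
    have hN0 : 0 < (N : ℝ) :=
      lt_of_le_of_lt (div_nonneg (sub_nonneg.2 hpq) hδ0.le) hN
    set gap : ℝ := (q - p) / N with hgap
    have hgap0 : 0 ≤ gap := div_nonneg (sub_nonneg.2 hpq) hN0.le
    have hgapδ : gap < δ := by
      rw [hgap, div_lt_iff₀ hN0]
      calc q - p = ((q - p) / δ) * δ := by field_simp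
        _ < N * δ := mul_lt_mul_of_pos_right hN hδ0
        _ = δ * N := mul_comm _ _
    set w : ℕ → ℝ := fun i => p + i * gap with hw
    have hwN : w N = q := by
      simp only [hw, hgap]
      field_simp
      ring
    have hwmem : ∀ i : ℕ, i ≤ N → w i ∈ Set.Icc a b := by
      intro i hi
      have h1 : p ≤ w i := le_add_of_nonneg_right (mul_nonneg (Nat.cast_nonneg i) hgap0)
      have h2 : w i ≤ q := by
        rw [← hwN]
        exact add_le_add_right (mul_le_mul_of_nonneg_right (Nat.cast_le.2 hi) hgap0) p
      exact ⟨hp.1.trans h1, h2.trans hq.2⟩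
    have hstep : ∀ i : ℕ, w (i + 1) - w i = gap := by
      intro i; simp only [hw]; push_cast; ring
    have tel : u q - u p = ∑ i ∈ Finset.range N, (u (w (i + 1)) - u (w i)) := by
      rw [Finset.sum_range_sub (fun i => u (w i))]
      rw [hwN]
      simp [hw]
    calc |u q - u p| ≤ ∑ i ∈ Finset.range N, |u (w (i + 1)) - u (w i)| := by
          rw [tel]; exact Finset.abs_sum_le_sum_abs _ _
      _ ≤ ∑ _i ∈ Finset.range N, (C : ℝ) * gap := by
          refine Finset.sum_le_sum fun i hi => ?_
          have hi' := Finset.mem_range.1 hi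
          have h1 := short (w i) (hwmem i hi'.le) (w (i + 1)) (hwmem (i + 1) hi')
            (by rw [hstep i, abs_of_nonneg hgap0]; exact hgapδ)
          rwa [hstep i, abs_of_nonneg hgap0] at h1
      _ = C * (q - p) := by
          rw [Finset.sum_const, Finset.card_range, nsmul_eq_mul, hgap]
          field_simp
  intro p hp q hq
  rcases le_total p q with h | h
  · rw [abs_of_nonneg (sub_nonneg.2 h)]; exact main p hp q hq h
  · rw [abs_sub_comm (u q), abs_sub_comm q p, abs_of_nonneg (sub_nonneg.2 h)]
    exact main q hq p hp h

lemma aux_ae_diff {n : ℕ} {f : EuclideanSpace ℝ (Fin n) → ℝ} (hf : LocallyLipschitz f) :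
    ∀ᵐ y ∂(volume : Measure (EuclideanSpace ℝ (Fin n))), DifferentiableAt ℝ f y := by
  choose K t ht hK using hf
  obtain ⟨T, hTc, hTu⟩ := TopologicalSpace.countable_cover_nhds
    (f := fun z => interior (t z)) (fun z => interior_mem_nhds.2 (ht z))
  have key : ∀ z ∈ T, ∀ᵐ y ∂(volume : Measure (EuclideanSpace ℝ (Fin n))),
      y ∈ interior (t z) → DifferentiableAt ℝ f y := by
    intro z _
    filter_upwards [(hK z).ae_differentiableWithinAt_of_mem
      (μ := (volume : Measure (EuclideanSpace ℝ (Fin n))))] with y hy hyi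
    exact (hy (interior_subset hyi)).differentiableAt
      (mem_nhds_iff.2 ⟨interior (t z), interior_subset, isOpen_interior, hyi⟩)
  filter_upwards [(ae_ball_iff hTc).2 key] with y hy
  obtain ⟨z, hz, hzy⟩ := Set.mem_iUnion₂.1 (hTu ▸ Set.mem_univ y)
  exact hy z hz hzy

lemma aux_mono_ftc {F : ℝ → ℝ} (hF : Monotone F) (hc : Continuous F)
    {a b : ℝ} (hab : a ≤ b) : ∫ s in a..b, deriv F s ≤ F b - F a := by
  set μ := hF.stieltjesFunction.measure with hμ
  have hst : ∀ z, hF.stieltjesFunction z = F z := fun z => by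
    rw [hF.stieltjesFunction_eq]
    exact rightLim_eq_of_tendsto
      ((hc.tendsto z).mono_left nhdsWithin_le_nhds)
  have hd : deriv F =ᵐ[volume] fun s => (μ.rnDeriv volume s).toReal := by
    filter_upwards [hF.ae_hasDerivAt] with s hs using hs.deriv
  have hfin : ∀ᵐ s ∂(volume : Measure ℝ), μ.rnDeriv volume s < ⊤ :=
    Measure.rnDeriv_lt_top μ volume
  rw [intervalIntegral.integral_of_le hab]
  calc ∫ s in Set.Ioc a b, deriv F s
      = ∫ s in Set.Ioc a b, (μ.rnDeriv volume s).toReal :=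
        integral_congr_ae (ae_restrict_of_ae hd)
    _ = (∫⁻ s in Set.Ioc a b, μ.rnDeriv volume s).toReal :=
        integral_toReal (μ.measurable_rnDeriv volume).aemeasurable
          (ae_restrict_of_ae hfin)
    _ ≤ (μ (Set.Ioc a b)).toReal := by
        refine ENNReal.toReal_mono ?_ (Measure.setLIntegral_rnDeriv_le _)
        rw [hμ, hF.stieltjesFunction.measure_Ioc]
        exact ENNReal.ofReal_ne_top
    _ = F b - F a := by
        rw [hμ, hF.stieltjesFunction.measure_Ioc, hst, hst,
          ENNReal.toReal_ofReal (sub_nonneg.2 (hF hab))]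

lemma aux_line_ae {n : ℕ} {f : EuclideanSpace ℝ (Fin n) → ℝ} (hf : LocallyLipschitz f)
    (g : EuclideanSpace ℝ (Fin n)) :
    ∀ᵐ y ∂(volume : Measure (EuclideanSpace ℝ (Fin n))),
      ∀ᵐ s ∂(volume : Measure ℝ), DifferentiableAt ℝ f (y - s • g) := by
  set D : Set (EuclideanSpace ℝ (Fin n)) := {z | ¬ DifferentiableAt ℝ f z} with hD
  have hDmeas : MeasurableSet D := (measurableSet_of_differentiableAt ℝ f).compl
  have hD0 : (volume : Measure (EuclideanSpace ℝ (Fin n))) D = 0 :=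
    MeasureTheory.ae_iff.1 (aux_ae_diff hf)
  set B : Set (EuclideanSpace ℝ (Fin n) × ℝ) := {q | q.1 - q.2 • g ∈ D} with hB
  have hBmeas : MeasurableSet B :=
    (continuous_fst.sub (continuous_snd.smul continuous_const)).measurable hDmeas
  have hslice : ∀ s : ℝ, (volume : Measure (EuclideanSpace ℝ (Fin n))) {y : EuclideanSpace ℝ (Fin n) | y - s • g ∈ D} = 0 := by
    intro s
    have : {y : EuclideanSpace ℝ (Fin n) | y - s • g ∈ D} = (fun y : EuclideanSpace ℝ (Fin n) => y + (-(s • g))) ⁻¹' D := by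
      ext y; simp [sub_eq_add_neg]
    rw [this, measure_preimage_add_right]
    exact hD0
  have hB0 : ((volume : Measure (EuclideanSpace ℝ (Fin n))).prod (volume : Measure ℝ)) B = 0 := by
    rw [Measure.prod_apply_symm hBmeas]
    have : ∀ s : ℝ, (volume : Measure (EuclideanSpace ℝ (Fin n))) ((fun y => (y, s)) ⁻¹' B) = 0 := by
      intro s
      convert hslice s using 2
      rfl
    simp only [this]
    simp
  have := (Measure.measure_prod_null hBmeas).1 hB0
  filter_upwards [this] with y hy
  have : ∀ᵐ s ∂(volume : Measure ℝ), s ∉ Prod.mk y ⁻¹' B :=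
    measure_eq_zero_iff_ae_notMem.1 hy
  filter_upwards [this] with s hs
  simpa [hB, hD] using hs

lemma aux_core {n : ℕ} {f : EuclideanSpace ℝ (Fin n) → ℝ} (hf : LocallyLipschitz f)
    {x g : EuclideanSpace ℝ (Fin n)} {ε β : ℝ}
    (hkey : ∀ z, ‖z - x‖ ≤ ε → DifferentiableAt ℝ f z →
      β * ‖g‖ ^ 2 ≤ (inner ℝ (gradient f z) g : ℝ))
    {y : EuclideanSpace ℝ (Fin n)} {t : ℝ} (ht0 : 0 ≤ t)
    (hyt : ‖y - x‖ + t * ‖g‖ ≤ ε)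
    (hae : ∀ᵐ s ∂(volume : Measure ℝ), DifferentiableAt ℝ f (y - s • g)) :
    f (y - t • g) ≤ f y - β * t * ‖g‖ ^ 2 := by
  -- the function along the line
  set φ : ℝ → ℝ := fun s => f (y - s • g) with hφ
  have hlin : LipschitzWith ‖g‖₊ (fun s : ℝ => y - s • g) := by
    apply LipschitzWith.of_dist_le_mul
    intro s r
    simp only [dist_eq_norm]
    have h : y - s • g - (y - r • g) = (s - r) • (-g) := by
      rw [sub_smul]; module
    rw [h, norm_smul, norm_neg]
    simp [mul_comm]
  have hφlip : LocallyLipschitz φ := hf.comp hlin.locallyLipschitz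
  obtain ⟨C, hC0, hCl⟩ := aux_lip_Icc hφlip 0 t
  -- clamping
  set proj : ℝ → ℝ := fun s => max 0 (min s t) with hproj
  have hprojmem : ∀ s, proj s ∈ Set.Icc 0 t :=
    fun s => ⟨le_max_left _ _, max_le ht0 (min_le_right _ _)⟩
  have hprojmono : Monotone proj := fun s r hsr =>
    max_le_max le_rfl (min_le_min hsr le_rfl)
  have hproj1 : ∀ s r : ℝ, |proj s - proj r| ≤ |s - r| := by
    intro s r
    have h1 : |max (min s t) 0 - max (min r t) 0| ≤ |min s t - min r t| :=
      abs_max_sub_max_le_abs _ _ _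
    have h2 : |min s t - min r t| ≤ max |s - r| |t - t| :=
      abs_min_sub_min_le_max _ _ _ _
    have h3 : proj s = max (min s t) 0 := max_comm _ _
    have h4 : proj r = max (min r t) 0 := max_comm _ _
    rw [h3, h4]
    refine h1.trans (h2.trans ?_)
    simp
  have hprojeq : ∀ s ∈ Set.Ioo 0 t, proj s = s := by
    intro s hs
    simp only [hproj]
    rw [min_eq_left hs.2.le, max_eq_right hs.1.le]
  have hproj0 : proj 0 = 0 := by simp [hproj, ht0]
  have hprojt : proj t = t := by simp [hproj, ht0]
  -- the monotone function
  set F : ℝ → ℝ := fun s => C * proj s - φ (proj s) with hF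
  have hFmono : Monotone F := by
    intro s r hsr
    have h1 := hprojmono hsr
    have h2 := hCl (proj s) (hprojmem s) (proj r) (hprojmem r)
    rw [abs_of_nonneg (sub_nonneg.2 h1)] at h2
    have h3 := (abs_le.1 h2).2
    simp only [hF]
    nlinarith
  have hφcont : Continuous φ := hf.continuous.comp (continuous_const.sub (continuous_id.smul continuous_const))
  have hprojcont : Continuous proj := continuous_const.max (continuous_id.min continuous_const)
  have hFcont : Continuous F :=
    ((continuous_const.mul hprojcont).sub (hφcont.comp hprojcont))
  have hFlip : LipschitzWith (2 * C).toNNReal F := by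
    apply LipschitzWith.of_dist_le_mul
    intro s r
    have h2 := hCl (proj r) (hprojmem r) (proj s) (hprojmem s)
    have h3 := hproj1 s r
    simp only [hF, Real.dist_eq]
    have habs : |C * proj s - φ (proj s) - (C * proj r - φ (proj r))| ≤
        C * |proj s - proj r| + |φ (proj s) - φ (proj r)| := by
      have := abs_sub (C * proj s - C * proj r) (φ (proj s) - φ (proj r))
      calc |C * proj s - φ (proj s) - (C * proj r - φ (proj r))|
          = |(C * proj s - C * proj r) - (φ (proj s) - φ (proj r))| := by ring_nf
        _ ≤ |C * proj s - C * proj r| + |φ (proj s) - φ (proj r)| := abs_sub _ _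
        _ = C * |proj s - proj r| + |φ (proj s) - φ (proj r)| := by
            rw [← mul_sub, abs_mul, abs_of_nonneg hC0]
    have hco : ((2 * C).toNNReal : ℝ) = 2 * C := Real.coe_toNNReal _ (by linarith)
    rw [hco]
    calc |C * proj s - φ (proj s) - (C * proj r - φ (proj r))|
        ≤ C * |proj s - proj r| + |φ (proj s) - φ (proj r)| := habs
      _ ≤ C * |s - r| + C * |proj s - proj r| := by
          have := mul_le_mul_of_nonneg_left h3 hC0
          nlinarith
      _ ≤ 2 * C * |s - r| := by
          have := mul_le_mul_of_nonneg_left h3 hC0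
          nlinarith
  -- boundedness of deriv F
  have hbound : ∀ s, |deriv F s| ≤ 2 * C := by
    intro s
    by_cases hd : DifferentiableAt ℝ F s
    · have h1 := hd.hasDerivAt.hasFDerivAt.le_of_lipschitz hFlip
      have h2 : ‖ContinuousLinearMap.toSpanSingleton ℝ (deriv F s)‖
          = |deriv F s| := by simp
      rw [h2] at h1
      exact h1.trans (le_of_eq (Real.coe_toNNReal _ (by linarith)))
    · rw [deriv_zero_of_not_differentiableAt hd]
      simp; linarith
  have hInt : IntervalIntegrable (deriv F) volume 0 t := by
    rw [intervalIntegrable_iff]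
    refine Integrable.mono' (g := fun _ => 2 * C) ?_ ?_ (ae_of_all _ ?_)
    · exact integrableOn_const measure_Ioc_lt_top.ne
    · exact (measurable_deriv F).aestronglyMeasurable
    · intro s; simpa using hbound s
  -- pointwise a.e. lower bound on the derivative
  have hends : ∀ᵐ s ∂(volume : Measure ℝ), s ∉ ({0, t} : Set ℝ) := by
    have : (volume : Measure ℝ) ({0, t} : Set ℝ) = 0 :=
      Set.Finite.measure_zero (Set.toFinite _) _
    exact measure_eq_zero_iff_ae_notMem.1 this
  have hptw : ∀ᵐ s ∂(volume : Measure ℝ).restrict (Set.Icc 0 t),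
      C + β * ‖g‖ ^ 2 ≤ deriv F s := by
    rw [ae_restrict_iff' measurableSet_Icc]
    filter_upwards [hae, hends] with s hsd hse hsIcc
    have hsIoo : s ∈ Set.Ioo 0 t := by
      rcases eq_or_lt_of_le hsIcc.1 with h | h
      · exact absurd (by simp [← h]) hse
      rcases eq_or_lt_of_le hsIcc.2 with h2 | h2
      · exact absurd (by simp [h2]) hse
      exact ⟨h, h2⟩
    set z := y - s • g with hz
    have hψ : HasDerivAt (fun r : ℝ => y - r • g) (-g) s := by
      simpa using ((hasDerivAt_id s).smul_const g).const_sub y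
    have hφd : HasDerivAt φ ((fderiv ℝ f z) (-g)) s :=
      (hsd.hasFDerivAt).comp_hasDerivAt s hψ
    have hGd : HasDerivAt (fun r : ℝ => C * r - φ r) (C - (fderiv ℝ f z) (-g)) s := by
      exact (((hasDerivAt_id s).const_mul C).sub hφd).congr_deriv (by simp)
    have hFeq : F =ᶠ[nhds s] fun r => C * r - φ r := by
      filter_upwards [isOpen_Ioo.mem_nhds hsIoo] with r hr
      simp only [hF, hprojeq r hr]
    have hFd : HasDerivAt F (C - (fderiv ℝ f z) (-g)) s :=
      hGd.congr_of_eventuallyEq hFeq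
    rw [hFd.deriv]
    have hinner : (fderiv ℝ f z) (-g) = (inner ℝ (gradient f z) (-g) : ℝ) := by
      rw [gradient, InnerProductSpace.toDual_symm_apply]
    have hzx : ‖z - x‖ ≤ ε := by
      have h1 : z - x = (y - x) - s • g := by rw [hz]; abel
      calc ‖z - x‖ ≤ ‖y - x‖ + ‖s • g‖ := by rw [h1]; exact norm_sub_le _ _
        _ = ‖y - x‖ + s * ‖g‖ := by
            rw [norm_smul, Real.norm_eq_abs, abs_of_nonneg hsIoo.1.le]
        _ ≤ ‖y - x‖ + t * ‖g‖ := by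
            have := mul_le_mul_of_nonneg_right hsIoo.2.le (norm_nonneg g)
            linarith
        _ ≤ ε := hyt
    have hk := hkey z hzx hsd
    rw [hinner, inner_neg_right]
    linarith
  -- integral comparison
  have h1 : (C + β * ‖g‖ ^ 2) * t ≤ ∫ s in (0:ℝ)..t, deriv F s := by
    have := intervalIntegral.integral_mono_ae_restrict ht0
      (intervalIntegrable_const (c := C + β * ‖g‖ ^ 2)) hInt hptw
    calc (C + β * ‖g‖ ^ 2) * t = ∫ _ in (0:ℝ)..t, (C + β * ‖g‖ ^ 2) := by
          rw [intervalIntegral.integral_const, smul_eq_mul]; ring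
      _ ≤ _ := this
  have h2 := aux_mono_ftc hFmono hFcont ht0
  have h3 : F t - F 0 = C * t - f (y - t • g) + f y := by
    simp only [hF, hprojt, hproj0, hφ]
    simp
    try ring
  have h4 : β * t * ‖g‖ ^ 2 = β * ‖g‖ ^ 2 * t := by ring
  nlinarith

theorem stmt9 {n : ℕ} (f : EuclideanSpace ℝ (Fin n) → ℝ) (hf : LocallyLipschitz f)
    (x : EuclideanSpace ℝ (Fin n)) (ε δ β : ℝ) (hε : 0 < ε) (hδ : 0 ≤ δ)
    (hβ0 : 0 < β) (hβ1 : β < 1)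
    (A : Set (EuclideanSpace ℝ (Fin n)))
    (hAne : A.Nonempty) (hAcl : IsClosed A) (hAco : Convex ℝ A)
    (hAsub : A ⊆ goldstein f ε x)
    (hcover : goldstein f ε x ⊆ A + Metric.closedBall (0 : EuclideanSpace ℝ (Fin n)) δ)
    (g : EuclideanSpace ℝ (Fin n)) (hgA : g ∈ A) (hgmin : ∀ w ∈ A, ‖g‖ ≤ ‖w‖)
    (hδg : δ ≤ (1 - β) * ‖g‖) :
    ∀ t : ℝ, 0 ≤ t → t ≤ ε / ‖g‖ → f (x - t • g) ≤ f x - β * t * ‖g‖ ^ 2 := by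
  intro t ht0 htub
  by_cases hg0 : g = 0
  · have h1 : t ≤ 0 := by simpa [hg0] using htub
    have ht : t = 0 := le_antisymm h1 ht0
    simp [ht]
  have hgpos : 0 < ‖g‖ := norm_pos_iff.2 hg0
  -- variational inequality
  haveI : Nonempty ↑A := ⟨⟨g, hgA⟩⟩
  have hnorm : ‖(0 : EuclideanSpace ℝ (Fin n)) - g‖ = ⨅ w : A, ‖(0 : EuclideanSpace ℝ (Fin n)) - w‖ := by
    refine le_antisymm (le_ciInf fun w => by simpa using hgmin w w.2) ?_
    exact ciInf_le ⟨0, by rintro r ⟨w, rfl⟩; positivity⟩ (⟨g, hgA⟩ : A)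
  have hvar0 := (norm_eq_iInf_iff_real_inner_le_zero hAco hgA).1 hnorm
  have hvar : ∀ a ∈ A, ‖g‖ ^ 2 ≤ (inner ℝ a g : ℝ) := by
    intro a ha
    have h0 := hvar0 a ha
    rw [zero_sub, inner_neg_left, inner_sub_right] at h0
    have h1 : (inner ℝ g g : ℝ) ≤ (inner ℝ g a : ℝ) := by linarith
    rw [real_inner_self_eq_norm_sq] at h1
    rwa [real_inner_comm] at h1
  -- key gradient bound
  have hkey : ∀ z, ‖z - x‖ ≤ ε → DifferentiableAt ℝ f z →
      β * ‖g‖ ^ 2 ≤ (inner ℝ (gradient f z) g : ℝ) := by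
    intro z hz hd
    have hmem : gradient f z ∈ goldstein f ε x :=
      subset_closure (subset_convexHull ℝ _
        ⟨z, hz, fun _ => z, tendsto_const_nhds, fun _ => hd, tendsto_const_nhds⟩)
    obtain ⟨a, ha, e, he, hae⟩ := Set.mem_add.1 (hcover hmem)
    have h1 : ‖g‖ ^ 2 ≤ (inner ℝ a g : ℝ) := hvar a ha
    have h2 : |(inner ℝ e g : ℝ)| ≤ δ * ‖g‖ :=
      (abs_real_inner_le_norm e g).trans
        (mul_le_mul_of_nonneg_right (mem_closedBall_zero_iff.1 he) (norm_nonneg g))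
    have h3 : δ * ‖g‖ ≤ (1 - β) * ‖g‖ ^ 2 := by nlinarith [norm_nonneg g]
    have h4 : (inner ℝ (gradient f z) g : ℝ) = (inner ℝ a g : ℝ) + (inner ℝ e g : ℝ) := by
      rw [← hae, inner_add_left]
    have h5 := abs_le.1 h2
    nlinarith [norm_nonneg g]
  have hc := hf.continuous
  -- result for t' with t' * ‖g‖ < ε
  have Qlt : ∀ t' : ℝ, 0 ≤ t' → t' * ‖g‖ < ε →
      f (x - t' • g) ≤ f x - β * t' * ‖g‖ ^ 2 := by
    intro t' ht'0 ht'ε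
    have hex : ∀ k : ℕ, ∃ y : EuclideanSpace ℝ (Fin n),
        ‖y - x‖ < min (ε - t' * ‖g‖) (1 / (k + 1)) ∧
        ∀ᵐ s ∂(volume : Measure ℝ), DifferentiableAt ℝ f (y - s • g) := by
      intro k
      by_contra hcon
      push_neg at hcon
      set r := min (ε - t' * ‖g‖) (1 / ((k : ℝ) + 1)) with hr
      have hr0 : 0 < r := lt_min (by linarith) (by positivity)
      have hball : (volume : Measure (EuclideanSpace ℝ (Fin n))) (Metric.ball x r) = 0 := by
        have hsub : Metric.ball x r ⊆
            {y : EuclideanSpace ℝ (Fin n) |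
              ¬ ∀ᵐ s ∂(volume : Measure ℝ), DifferentiableAt ℝ f (y - s • g)} := by
          intro y hy
          have : ‖y - x‖ < r := by rwa [Metric.mem_ball, dist_eq_norm] at hy
          exact Filter.not_eventually.2 (hcon y this)
        refine measure_mono_null hsub ?_
        exact MeasureTheory.ae_iff.1 (aux_line_ae hf g)
      exact absurd hball (Metric.measure_ball_pos _ x hr0).ne'
    choose y hy hyae using hex
    have hyx : Tendsto y atTop (𝓝 x) := by
      rw [tendsto_iff_norm_sub_tendsto_zero]
      have hb : ∀ k : ℕ, ‖y k - x‖ ≤ 1 / (k + 1) :=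
        fun k => ((hy k).trans_le (min_le_right _ _)).le
      refine squeeze_zero (fun k => norm_nonneg _) hb ?_
      exact tendsto_one_div_add_atTop_nhds_zero_nat
    have hk : ∀ k, f (y k - t' • g) ≤ f (y k) - β * t' * ‖g‖ ^ 2 := by
      intro k
      refine aux_core hf hkey ht'0 ?_ (hyae k)
      have := (hy k).trans_le (min_le_left _ _)
      linarith
    have l1 : Tendsto (fun k => f (y k - t' • g)) atTop (𝓝 (f (x - t' • g))) :=
      (hc.tendsto _).comp (hyx.sub_const _)
    have l2 : Tendsto (fun k => f (y k) - β * t' * ‖g‖ ^ 2) atTop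
        (𝓝 (f x - β * t' * ‖g‖ ^ 2)) :=
      (((hc.tendsto x).comp hyx).sub_const _)
    exact le_of_tendsto_of_tendsto' l1 l2 hk
  -- pass to the limit t' → t
  have htg : t * ‖g‖ ≤ ε := by
    rw [le_div_iff₀ hgpos] at htub; exact htub
  set s : ℕ → ℝ := fun k => t * (k / (k + 1)) with hs
  have hfrac : ∀ k : ℕ, 0 ≤ (k : ℝ) / (k + 1) ∧ (k : ℝ) / (k + 1) < 1 := by
    intro k
    constructor
    · positivity
    · rw [div_lt_one (by positivity)]; linarith
  have hs0 : ∀ k, 0 ≤ s k := fun k => mul_nonneg ht0 (hfrac k).1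
  have hslt : ∀ k, s k * ‖g‖ < ε := by
    intro k
    have h1 : s k * ‖g‖ = (t * ‖g‖) * ((k : ℝ) / (k + 1)) := by rw [hs]; ring
    rcases eq_or_lt_of_le (mul_nonneg ht0 hgpos.le) with h | h
    · rw [h1, ← h]; simpa using hε
    · calc s k * ‖g‖ = (t * ‖g‖) * ((k : ℝ) / (k + 1)) := h1
        _ < (t * ‖g‖) * 1 := by
            exact mul_lt_mul_of_pos_left (by
              rw [div_lt_one (by positivity)]; linarith) h
        _ ≤ ε := by rw [mul_one]; exact htg
  have hQ : ∀ k, f (x - s k • g) ≤ f x - β * s k * ‖g‖ ^ 2 :=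
    fun k => Qlt _ (hs0 k) (hslt k)
  have hst : Tendsto s atTop (𝓝 t) := by
    have h1 : Tendsto (fun k : ℕ => (k : ℝ) / (k + 1)) atTop (𝓝 1) := by
      have := tendsto_one_div_add_atTop_nhds_zero_nat (𝕜 := ℝ)
      have h2 : ∀ k : ℕ, (k : ℝ) / (k + 1) = 1 - 1 / (k + 1) := by
        intro k; field_simp; ring
      simp only [h2]
      simpa using (tendsto_const_nhds (x := (1:ℝ))).sub this
    have := (tendsto_const_nhds (x := t)).mul h1
    simpa using this
  have l1 : Tendsto (fun k => f (x - s k • g)) atTop (𝓝 (f (x - t • g))) :=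
    (hc.tendsto _).comp (tendsto_const_nhds.sub (hst.smul_const g))
  have l2 : Tendsto (fun k => f x - β * s k * ‖g‖ ^ 2) atTop
      (𝓝 (f x - β * t * ‖g‖ ^ 2)) := by
    have h3 : Tendsto (fun k => β * s k * ‖g‖ ^ 2) atTop (𝓝 (β * t * ‖g‖ ^ 2)) := by
      exact (((tendsto_const_nhds (x := β)).mul hst).mul tendsto_const_nhds)
    exact tendsto_const_nhds.sub h3
  exact le_of_tendsto_of_tendsto' l1 l2 hQ
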